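/- arXiv:1912.04213 — 3 statements merged into one kernel-verified Lean document; each statement's English description precedes it below -/
import Mathlib

section
/- Let T be a symmetric bilinear form on a Lorentzian 4-space satisfying the Null Energy Condition T(k,k) ≥ 0 for all null vectors k. Let u be unit timelike, n unit timelike with γ = -g(n,u), and suppose the heat flux q := -b(T(u,·)) vanishes, where b is projection orthogonal to u. Writing ε := T(u,u), p := (1/3)·trace of T restricted orthogonal to u, π the trace-free orthogonal part, and v the tilt vector with u = γ(n+v), one has (γ²-1)(ε+p) + π(v,v) ≥ 0. Hence T(n,n) - T(u,u) ≥ 0. -/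
/-- For a stress-energy tensor `T = ε u⊗u + p·b + π` (vanishing heat flux `q = 0`,
`π` symmetric and `u`-orthogonal) satisfying the Null Energy Condition, and a tilted
unit normal `n` with `u = γ(n+v)`, `g(n,v) = 0`, `g(v,v) = 1 - 1/γ²`, one has
`(γ²-1)(ε+p) + π(v,v) ≥ 0`, hence `T(n,n) - T(u,u) ≥ 0`. -/
theorem NEC_tilt_energy_difference {V : Type*} [AddCommGroup V] [Module ℝ V]
    (g T π : V →ₗ[ℝ] V →ₗ[ℝ] ℝ)
    (hgsymm : ∀ x y, g x y = g y x)
    (u n v : V) (γ ε p : ℝ)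
    (huu : g u u = -1) (hnn : g n n = -1)
    (hγ : γ = -(g n u)) (hγ1 : 1 ≤ γ)
    (hu : u = γ • (n + v)) (hnv : g n v = 0) (hvv : g v v = 1 - 1 / γ ^ 2)
    (hπsymm : ∀ x y, π x y = π y x) (hπu : ∀ x, π u x = 0)
    (hT : ∀ x y, T x y = ε * (g u x) * (g u y)
          + p * (g x y + (g u x) * (g u y)) + π x y)
    (hNEC : ∀ k, g k k = 0 → 0 ≤ T k k) :
    0 ≤ (γ ^ 2 - 1) * (ε + p) + π v v ∧ 0 ≤ T n n - T u u := by
  have hγ0 : γ ≠ 0 := by positivity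
  have hγ2 : (0:ℝ) ≤ γ ^ 2 - 1 := by nlinarith
  have hguv : g u v = γ - 1 / γ := by
    rw [hu]; simp [map_add, hnv, hvv]
    field_simp
  have hgvu : g v u = γ - 1 / γ := by rw [hgsymm]; exact hguv
  set c : ℝ := γ - 1 / γ with hc
  set w : V := v + c • u with hw
  have hguw : g u w = 0 := by
    simp [hw, map_add, hguv, huu, hc]
  have hgwu : g w u = 0 := by rw [hgsymm]; exact hguw
  have hww : g w w = γ ^ 2 - 1 := by
    simp [hw, map_add, hvv, huu, hgvu, hguv, hc]
    field_simp
    ring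
  set a : ℝ := Real.sqrt (γ ^ 2 - 1) with ha
  have ha2 : a ^ 2 = γ ^ 2 - 1 := Real.sq_sqrt hγ2
  set k : V := a • u + w with hk
  have hkk : g k k = 0 := by
    simp [hk, map_add, huu, hguw, hgwu, hww]
    nlinarith [ha2]
  have hguk : g u k = -a := by
    simp [hk, map_add, huu, hguw]
  have hπww : π w w = π v v := by
    simp [hw, map_add, hπu, hπsymm v u]
  have hπkk : π k k = π v v := by
    simp [hk, map_add, hπu, hπsymm w u, hπww]
  have h1 : 0 ≤ (γ ^ 2 - 1) * (ε + p) + π v v := by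
    have hne := hNEC k hkk
    rw [hT k k, hguk, hkk, hπkk] at hne
    have key : ε * -a * -a + p * (0 + -a * -a) = (γ ^ 2 - 1) * (ε + p) := by
      linear_combination (ε + p) * ha2
    linarith [hne, key.symm.le]
  refine ⟨h1, ?_⟩
  have hn : n = γ⁻¹ • u - v := by
    rw [hu, smul_smul, inv_mul_cancel₀ hγ0, one_smul]; abel
  have hπnn : π n n = π v v := by
    rw [hn]
    simp [map_sub, map_smul, hπu, hπsymm v u, hπsymm v v]
  have hgun : g u n = -γ := by rw [hgsymm]; linarith [hγ]
  have hTuu : T u u = ε := by rw [hT, huu]; simp [hπu]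
  have hTnn : T n n = ε * γ ^ 2 + p * (γ ^ 2 - 1) + π v v := by
    rw [hT, hgun, hnn, hπnn]; ring
  rw [hTnn, hTuu]; nlinarith [h1]
end

section
/- Suppose a, Q, W, P, ε, p : ℝ → ℝ are differentiable with a > 0, H := a'/a, and they satisfy the two averaged equations: 3(a''/a) = -4πG(ε + 3p) + Λ + Q + P and 3H² = 8πGε + Λ - Q/2 - W/2 (with W here denoting ⟨R⟩, the averaged curvature). Then differentiating the second equation and substituting yields the integrability condition: Q' + 6HQ + W' + 2HW + 4HP = 16πG(ε' + 3H(ε + p)). -/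
/-- The integrability condition: the averaged Raychaudhuri and Hamiltonian
constraint equations imply
`Q' + 6HQ + W' + 2HW + 4HP = 16πG(ε' + 3H(ε+p))` with `H = a'/a`. -/
theorem integrability_condition (G Λ : ℝ) (a Q W P ε p : ℝ → ℝ)
    (ha : Differentiable ℝ a) (ha' : Differentiable ℝ (deriv a))
    (hQ : Differentiable ℝ Q) (hW : Differentiable ℝ W) (hP : Differentiable ℝ P)
    (hε : Differentiable ℝ ε) (hp : Differentiable ℝ p)
    (hapos : ∀ t, 0 < a t)
    (heq1 : ∀ t, 3 * (deriv (deriv a) t / a t)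
      = -(4 * Real.pi * G) * (ε t + 3 * p t) + Λ + Q t + P t)
    (heq2 : ∀ t, 3 * (deriv a t / a t) ^ 2
      = 8 * Real.pi * G * ε t + Λ - Q t / 2 - W t / 2) :
    ∀ t, deriv Q t + 6 * (deriv a t / a t) * Q t
        + deriv W t + 2 * (deriv a t / a t) * W t
        + 4 * (deriv a t / a t) * P t
      = 16 * Real.pi * G * (deriv ε t + 3 * (deriv a t / a t) * (ε t + p t)) := by
  intro t
  have hane : a t ≠ 0 := (hapos t).ne'
  -- derivative of the LHS of heq2
  have h1 : HasDerivAt (fun s => 3 * (deriv a s / a s) ^ 2)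
      (3 * ((2 : ℕ) * (deriv a t / a t) ^ 1 *
        ((deriv (deriv a) t * a t - deriv a t * deriv a t) / a t ^ 2))) t := by
    exact ((((ha' t).hasDerivAt.div (ha t).hasDerivAt hane).pow 2).const_mul 3)
  -- derivative of the RHS of heq2
  have h2 : HasDerivAt (fun s => 8 * Real.pi * G * ε s + Λ - Q s / 2 - W s / 2)
      (8 * Real.pi * G * deriv ε t - deriv Q t / 2 - deriv W t / 2) t := by
    exact ((((hε t).hasDerivAt.const_mul (8 * Real.pi * G)).add_const Λ).sub
      ((hQ t).hasDerivAt.div_const 2)).sub ((hW t).hasDerivAt.div_const 2)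
  have hfun : (fun s => 3 * (deriv a s / a s) ^ 2)
      = fun s => 8 * Real.pi * G * ε s + Λ - Q s / 2 - W s / 2 := funext heq2
  rw [hfun] at h1
  have key := h1.unique h2
  have e1 := heq1 t
  have e2 := heq2 t
  push_cast at key
  field_simp at key e1 e2
  have P3 : (deriv Q t * a t + 6 * deriv a t * Q t + deriv W t * a t
        + 2 * deriv a t * W t + 4 * deriv a t * P t) * a t ^ 2
      = (16 * Real.pi * G * (deriv ε t * a t + 3 * deriv a t * (ε t + p t))) * a t ^ 2 := by
    linear_combination key + (-4 * deriv a t * a t) * e1 + (2 * deriv a t) * e2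
  have fin := mul_right_cancel₀ (pow_ne_zero 2 hane) P3
  field_simp
  linear_combination fin
end

section
/- Suppose Q and W are differentiable functions of t, a > 0 differentiable with a(t₀) = 1, satisfying Q' + 6(a'/a)Q + W' + 2(a'/a)W = 0. Then W(t) = -Q(t) + a(t)⁻²·(W(t₀) + Q(t₀) - 4∫_{t₀}^{t} Q(s)·a(s)·a'(s) ds). -/
/-- Integrated form of the dust integrability condition: if
`Q' + 6(a'/a)Q + W' + 2(a'/a)W = 0` and `a(t₀) = 1`, then
`W(t) = -Q(t) + a(t)⁻²(W(t₀) + Q(t₀) - 4∫_{t₀}^t Q a a')`. -/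
theorem integrated_integrability_dust (a Q W : ℝ → ℝ)
    (ha : Differentiable ℝ a) (ha' : Continuous (deriv a))
    (hQ : Differentiable ℝ Q) (hW : Differentiable ℝ W)
    (hapos : ∀ t, 0 < a t) (t₀ : ℝ) (ha0 : a t₀ = 1)
    (heq : ∀ t, deriv Q t + 6 * (deriv a t / a t) * Q t
        + deriv W t + 2 * (deriv a t / a t) * W t = 0) :
    ∀ t, W t = -Q t + (a t)⁻¹ ^ 2 *
      (W t₀ + Q t₀ - 4 * ∫ s in t₀..t, Q s * a s * deriv a s) := by
  intro t
  set F : ℝ → ℝ := fun s => a s ^ 2 * (Q s + W s) with hF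
  have hder : ∀ s, HasDerivAt F (-4 * (Q s * a s * deriv a s)) s := by
    intro s
    have h1 : HasDerivAt a (deriv a s) s := (ha s).hasDerivAt
    have h2 : HasDerivAt Q (deriv Q s) s := (hQ s).hasDerivAt
    have h3 : HasDerivAt W (deriv W s) s := (hW s).hasDerivAt
    have h4 : HasDerivAt F
        (2 * a s ^ 1 * deriv a s * (Q s + W s) + a s ^ 2 * (deriv Q s + deriv W s)) s :=
      (h1.pow 2).mul (h2.add h3)
    convert h4 using 1
    have hne : a s ≠ 0 := (hapos s).ne'
    have := heq s
    have hsum : deriv Q s + deriv W s =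
        -(6 * (deriv a s / a s) * Q s) - 2 * (deriv a s / a s) * W s := by linarith
    rw [hsum]
    field_simp
    ring
  have hcont : Continuous fun s => -4 * (Q s * a s * deriv a s) :=
    continuous_const.mul ((hQ.continuous.mul ha.continuous).mul ha')
  have hint : ∫ s in t₀..t, -4 * (Q s * a s * deriv a s) = F t - F t₀ :=
    intervalIntegral.integral_eq_sub_of_hasDerivAt (fun s _ => hder s)
      (hcont.intervalIntegrable t₀ t)
  rw [intervalIntegral.integral_const_mul] at hint
  have hFt₀ : F t₀ = Q t₀ + W t₀ := by simp [hF, ha0]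
  have hFt : F t = a t ^ 2 * (Q t + W t) := rfl
  have hne : a t ≠ 0 := (hapos t).ne'
  have : a t ^ 2 * (Q t + W t) = (Q t₀ + W t₀) - 4 * ∫ s in t₀..t, Q s * a s * deriv a s := by
    rw [← hFt₀, ← hFt]; linarith
  field_simp
  linarith [this]
end
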